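/- Let φ be a real number with |φ| < 1. Then for every fixed pair of natural-number indices i, j, the sequence n ↦ (A_n(φ)⁻¹)_{i j} (defined for all n > max(i,j)) converges, as n → ∞, to (1/(2√(1−φ²)))·(φ/(1+√(1−φ²)))^{|i−j|}. -/

import Mathlib

open Matrix Filter Topology

/-- The unscaled conditional autoregressive (CAR) precision matrix of the ring graph on
`n` vertices: entries are `2` on the diagonal, `-φ` at positions with `|i - j| = 1` or
`|i - j| = n - 1`, and `0` otherwise. -/
noncomputable def ringA (n : ℕ) (φ : ℝ) : Matrix (Fin n) (Fin n) ℝ :=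
  Matrix.of fun i j =>
    if i = j then 2
    else if Nat.dist i.val j.val = 1 ∨ Nat.dist i.val j.val = n - 1 then -φ
    else 0

lemma fin_sub_val {n : ℕ} (i j : Fin n) :
    ((i - j).val = i.val - j.val ∧ j.val ≤ i.val) ∨
    ((i - j).val = n - (j.val - i.val) ∧ i.val < j.val) := by
  haveI : NeZero n := ⟨(Nat.pos_of_ne_zero (fun h => by subst h; exact i.elim0)).ne'⟩
  have h : (i - j) + j = i := sub_add_cancel i j
  have hv : ((i - j).val + j.val) % n = i.val := by
    have := congrArg Fin.val h
    rwa [Fin.val_add] at this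
  have hk : (i - j).val < n := (i - j).isLt
  have hj : j.val < n := j.isLt
  have hi : i.val < n := i.isLt
  by_cases hlt : (i - j).val + j.val < n
  · rw [Nat.mod_eq_of_lt hlt] at hv
    omega
  · have : ((i - j).val + j.val) % n = (i - j).val + j.val - n := by
      rw [Nat.mod_eq_sub_mod (by omega), Nat.mod_eq_of_lt (by omega)]
    rw [this] at hv
    omega

lemma ringA_apply (n : ℕ) [NeZero n] (hn : 3 ≤ n) (φ : ℝ) (i k : Fin n) :
    ringA n φ i k =
      2 * (if k = i then (1:ℝ) else 0) - φ * (if k = i + 1 then 1 else 0)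
        - φ * (if k = i - 1 then 1 else 0) := by

  have hi : i.val < n := i.isLt
  have hk : k.val < n := k.isLt
  have h1 : (1 : Fin n).val = 1 := by
    rw [Fin.val_one']; exact Nat.mod_eq_of_lt (by omega)
  have hv1 : ((i + 1 : Fin n)).val = (i.val + 1) % n := by rw [Fin.val_add, h1]
  have hv2 : ((i - 1 : Fin n)).val = (n - 1 + i.val) % n := by rw [Fin.sub_def, h1]
  have m1 : (i.val + 1) % n = if i.val = n - 1 then 0 else i.val + 1 := by
    split
    · rw [show i.val + 1 = n by omega, Nat.mod_self]
    · exact Nat.mod_eq_of_lt (by omega)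
  have m2 : (n - 1 + i.val) % n = if i.val = 0 then n - 1 else i.val - 1 := by
    split
    · rw [show n - 1 + i.val = n - 1 by omega]; exact Nat.mod_eq_of_lt (by omega)
    · rw [show n - 1 + i.val = (i.val - 1) + n by omega, Nat.add_mod_right]
      exact Nat.mod_eq_of_lt (by omega)
  have e0 : (i = k) ↔ (i.val = k.val) := Fin.ext_iff
  have e1 : (k = i + 1) ↔ (k.val = if i.val = n - 1 then 0 else i.val + 1) := by
    rw [Fin.ext_iff, hv1, m1]
  have e2 : (k = i - 1) ↔ (k.val = if i.val = 0 then n - 1 else i.val - 1) := by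
    rw [Fin.ext_iff, hv2, m2]
  have e3 : (k = i) ↔ (k.val = i.val) := Fin.ext_iff
  simp only [ringA, Matrix.of_apply, e0, e1, e2, e3, Nat.dist]
  split_ifs <;> first | ring1 | omega | (rename_i hh; simp only [hh, if_true, if_false]; split_ifs <;> first | ring1 | omega)

/-- Scalar facts packaged. -/
lemma ring_scalar (φ : ℝ) (hφ : |φ| < 1) :
    let s := Real.sqrt (1 - φ ^ 2); let r := φ / (1 + s);
    0 < s ∧ s ^ 2 = 1 - φ ^ 2 ∧ r * (1 + s) = φ ∧ |r| < 1 ∧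
      φ * (1 + r ^ 2) = 2 * r ∧ φ * r = 1 - s := by
  intro s r
  have hφ2 : φ ^ 2 < 1 := by
    have := (sq_lt_one_iff_abs_lt_one φ).mpr hφ
    exact this
  have hspos : 0 < s := Real.sqrt_pos.mpr (by linarith)
  have hs2 : s ^ 2 = 1 - φ ^ 2 := Real.sq_sqrt (by linarith)
  have h1s : (0:ℝ) < 1 + s := by linarith
  have hrsφ : r * (1 + s) = φ := div_mul_cancel₀ φ (ne_of_gt h1s)
  have habs : |r| < 1 := by
    rw [show r = φ / (1 + s) from rfl, abs_div, abs_of_pos h1s, div_lt_one h1s]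
    calc |φ| < 1 := hφ
      _ ≤ 1 + s := by linarith
  refine ⟨hspos, hs2, hrsφ, habs, ?_, ?_⟩
  · show φ * (1 + (φ / (1+s)) ^ 2) = 2 * (φ / (1+s))
    field_simp
    linear_combination φ * hs2
  · show φ * (φ / (1+s)) = 1 - s
    field_simp
    linear_combination hs2

noncomputable def ringW (n : ℕ) (φ : ℝ) (k : Fin n) : ℝ :=
  ((φ / (1 + Real.sqrt (1 - φ ^ 2))) ^ k.val
      + (φ / (1 + Real.sqrt (1 - φ ^ 2))) ^ (n - k.val))
    / (2 * Real.sqrt (1 - φ ^ 2) * (1 - (φ / (1 + Real.sqrt (1 - φ ^ 2))) ^ n))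

lemma ring_key (φ : ℝ) (hφ : |φ| < 1) (n : ℕ) [NeZero n] (hn : 3 ≤ n) (d : Fin n) :
    2 * ringW n φ d - φ * ringW n φ (d + 1) - φ * ringW n φ (d - 1)
      = if d = 0 then 1 else 0 := by
  obtain ⟨hspos, hs2, hrsφ, habs, hid, hφr⟩ := ring_scalar φ hφ
  set s := Real.sqrt (1 - φ ^ 2) with hs
  set r := φ / (1 + s) with hr
  have hrn1 : |r ^ n| < 1 := by
    rw [abs_pow]; exact pow_lt_one₀ (abs_nonneg r) habs (by omega)
  have hDpos : 0 < 1 - r ^ n := by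
    have := (abs_lt.mp hrn1).2; linarith
  have hD : 2 * s * (1 - r ^ n) ≠ 0 := by positivity
  have h1 : (1 : Fin n).val = 1 := by
    rw [Fin.val_one']; exact Nat.mod_eq_of_lt (by omega)
  have hv1 : ((d + 1 : Fin n)).val = (d.val + 1) % n := by rw [Fin.val_add, h1]
  have hv2 : ((d - 1 : Fin n)).val = (n - 1 + d.val) % n := by rw [Fin.sub_def, h1]
  have hdlt : d.val < n := d.isLt
  by_cases hm0 : d.val = 0
  · -- d = 0
    have hd0 : d = 0 := by rw [Fin.ext_iff, hm0]; rfl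
    have e1 : ((d + 1 : Fin n)).val = 1 := by
      rw [hv1, hm0]; exact Nat.mod_eq_of_lt (by omega)
    have e2 : ((d - 1 : Fin n)).val = n - 1 := by
      rw [hv2, hm0]; exact Nat.mod_eq_of_lt (by omega)
    rw [if_pos hd0]
    unfold ringW
    rw [e1, e2, hm0]
    rw [show n - 0 = n from rfl, show n - (n - 1) = 1 by omega]
    have hb : r ^ n = r * r ^ (n - 1) := by
      rw [← pow_succ']; congr 1; omega
    rw [show (2 : ℝ) * ((r ^ 0 + r ^ n) / (2 * s * (1 - r ^ n)))
        - φ * ((r ^ 1 + r ^ (n - 1)) / (2 * s * (1 - r ^ n)))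
        - φ * ((r ^ (n - 1) + r ^ 1) / (2 * s * (1 - r ^ n)))
        = (2 * (r ^ 0 + r ^ n) - φ * (r ^ 1 + r ^ (n - 1)) - φ * (r ^ (n - 1) + r ^ 1))
          / (2 * s * (1 - r ^ n)) by ring]
    rw [div_eq_one_iff_eq hD, hb]
    ring_nf
    linear_combination (-2 : ℝ) * hφr + 2 * (r ^ (n - 1)) * hrsφ
  · have hd0 : d ≠ 0 := by
      intro h; exact hm0 (by rw [h]; rfl)
    rw [if_neg hd0]
    by_cases hmtop : d.val = n - 1
    · have e1 : ((d + 1 : Fin n)).val = 0 := by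
        rw [hv1, hmtop, show n - 1 + 1 = n by omega, Nat.mod_self]
      have e2 : ((d - 1 : Fin n)).val = n - 2 := by
        rw [hv2, hmtop, show n - 1 + (n - 1) = (n - 2) + n by omega, Nat.add_mod_right]
        exact Nat.mod_eq_of_lt (by omega)
      unfold ringW
      rw [e1, e2, hmtop]
      rw [show n - (n - 1) = 1 by omega, show n - 0 = n from rfl,
        show n - (n - 2) = 2 by omega]
      have hb1 : r ^ (n - 1) = r * r ^ (n - 2) := by
        rw [← pow_succ']; congr 1; omega
      have hb2 : r ^ n = r ^ 2 * r ^ (n - 2) := by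
        rw [← pow_add]; congr 1; omega
      rw [show (2 : ℝ) * ((r ^ (n - 1) + r ^ 1) / (2 * s * (1 - r ^ n)))
          - φ * ((r ^ 0 + r ^ n) / (2 * s * (1 - r ^ n)))
          - φ * ((r ^ (n - 2) + r ^ 2) / (2 * s * (1 - r ^ n)))
          = (2 * (r ^ (n - 1) + r ^ 1) - φ * (r ^ 0 + r ^ n) - φ * (r ^ (n - 2) + r ^ 2))
            / (2 * s * (1 - r ^ n)) by ring]
      rw [div_eq_zero_iff]
      left
      rw [hb1, hb2]
      linear_combination (-(r ^ (n - 2)) - 1) * hid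
    · -- middle case: 1 ≤ d.val ≤ n - 2
      have e1 : ((d + 1 : Fin n)).val = d.val + 1 := by
        rw [hv1]; exact Nat.mod_eq_of_lt (by omega)
      have e2 : ((d - 1 : Fin n)).val = d.val - 1 := by
        rw [hv2, show n - 1 + d.val = (d.val - 1) + n by omega, Nat.add_mod_right]
        exact Nat.mod_eq_of_lt (by omega)
      unfold ringW
      rw [e1, e2]
      have p1 : r ^ d.val = r * r ^ (d.val - 1) := by
        rw [← pow_succ']; congr 1; omega
      have p2 : r ^ (d.val + 1) = r ^ 2 * r ^ (d.val - 1) := by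
        rw [← pow_add]; congr 1; omega
      have p3 : r ^ (n - d.val) = r * r ^ (n - (d.val + 1)) := by
        rw [← pow_succ']; congr 1; omega
      have p4 : r ^ (n - (d.val - 1)) = r ^ 2 * r ^ (n - (d.val + 1)) := by
        rw [← pow_add]; congr 1; omega
      rw [show (2 : ℝ) * ((r ^ d.val + r ^ (n - d.val)) / (2 * s * (1 - r ^ n)))
          - φ * ((r ^ (d.val + 1) + r ^ (n - (d.val + 1))) / (2 * s * (1 - r ^ n)))
          - φ * ((r ^ (d.val - 1) + r ^ (n - (d.val - 1))) / (2 * s * (1 - r ^ n)))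
          = (2 * (r ^ d.val + r ^ (n - d.val))
              - φ * (r ^ (d.val + 1) + r ^ (n - (d.val + 1)))
              - φ * (r ^ (d.val - 1) + r ^ (n - (d.val - 1))))
            / (2 * s * (1 - r ^ n)) by ring]
      rw [div_eq_zero_iff]
      left
      rw [p1, p2, p3, p4]
      linear_combination (-(r ^ (d.val - 1)) - r ^ (n - (d.val + 1))) * hid

noncomputable def ringB (n : ℕ) (φ : ℝ) : Matrix (Fin n) (Fin n) ℝ :=
  Matrix.of fun i j => ringW n φ (i - j)

lemma ringA_mul_ringB (φ : ℝ) (hφ : |φ| < 1) (n : ℕ) [NeZero n] (hn : 3 ≤ n) :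
    ringA n φ * ringB n φ = 1 := by
  ext i j
  rw [Matrix.mul_apply]
  have : ∀ k : Fin n, ringA n φ i k * ringB n φ k j
      = 2 * (if k = i then ringB n φ k j else 0)
        - φ * (if k = i + 1 then ringB n φ k j else 0)
        - φ * (if k = i - 1 then ringB n φ k j else 0) := by
    intro k
    rw [ringA_apply n hn φ i k]
    split_ifs <;> ring
  simp_rw [this]
  rw [Finset.sum_sub_distrib, Finset.sum_sub_distrib, ← Finset.mul_sum, ← Finset.mul_sum,
    ← Finset.mul_sum, Finset.sum_ite_eq', Finset.sum_ite_eq', Finset.sum_ite_eq']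
  simp only [Finset.mem_univ, if_true]
  have hB : ∀ k : Fin n, ringB n φ k j = ringW n φ (k - j) := fun _ => rfl
  rw [hB, hB, hB]
  rw [show i + 1 - j = (i - j) + 1 from add_sub_right_comm i 1 j, show i - 1 - j = (i - j) - 1 from sub_right_comm i 1 j]
  rw [ring_key φ hφ n hn (i - j)]
  rw [Matrix.one_apply]
  congr 1
  simp [sub_eq_zero, eq_comm]


lemma ringA_inv (φ : ℝ) (hφ : |φ| < 1) (n : ℕ) [NeZero n] (hn : 3 ≤ n) :
    (ringA n φ)⁻¹ = ringB n φ :=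
  Matrix.inv_eq_right_inv (ringA_mul_ringB φ hφ n hn)

/-- Theorem E.5: for `|φ| < 1`, the `(i,j)` entry of `A_n(φ)⁻¹` converges, as `n → ∞`, to
`(1/(2√(1-φ²))) (φ/(1+√(1-φ²)))^{|i-j|}`. -/
theorem limiting_ringA_inv_entries (φ : ℝ) (hφ : |φ| < 1) (i j : ℕ) :
    Tendsto
      (fun n : ℕ =>
        if h : i < n ∧ j < n then (ringA n φ)⁻¹ ⟨i, h.1⟩ ⟨j, h.2⟩ else 0)
      atTop
      (𝓝 ((1 / (2 * Real.sqrt (1 - φ ^ 2))) *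
        (φ / (1 + Real.sqrt (1 - φ ^ 2))) ^ Nat.dist i j)) := by
  obtain ⟨hspos, hs2, hrsφ, habs, hid, hφr⟩ := ring_scalar φ hφ
  set s := Real.sqrt (1 - φ ^ 2) with hs
  set r := φ / (1 + s) with hr
  set D := Nat.dist i j with hD
  -- the auxiliary sequence
  have hL : Tendsto (fun n : ℕ => (r ^ D + r ^ (n - D)) / (2 * s * (1 - r ^ n)))
      atTop (𝓝 ((r ^ D + 0) / (2 * s * (1 - 0)))) := by
    apply Tendsto.div
    · exact tendsto_const_nhds.add
        ((tendsto_pow_atTop_nhds_zero_of_abs_lt_one habs).comp (tendsto_sub_atTop_nat D))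
    · exact (tendsto_const_nhds.mul (tendsto_const_nhds.sub
        (tendsto_pow_atTop_nhds_zero_of_abs_lt_one habs)))
    · simp; positivity
  have hval : (r ^ D + 0) / (2 * s * (1 - 0)) = (1 / (2 * s)) * r ^ D := by
    field_simp
    ring
  rw [hval] at hL
  apply hL.congr'
  rw [eventuallyEq_iff_exists_mem]
  refine ⟨Set.Ici (max (max i j + 1) 3), Ici_mem_atTop _, ?_⟩
  intro n hn
  simp only [Set.mem_Ici, max_le_iff] at hn
  obtain ⟨⟨hin, hjn⟩, h3n⟩ : ((i < n ∧ j < n) ∧ 3 ≤ n) := by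
    constructor
    · omega
    · omega
  haveI : NeZero n := ⟨by omega⟩
  have key : (ringA n φ)⁻¹ ⟨i, hin⟩ ⟨j, hjn⟩
      = (r ^ D + r ^ (n - D)) / (2 * s * (1 - r ^ n)) := by
    rw [ringA_inv φ hφ n h3n]
    show ringW n φ ((⟨i, hin⟩ : Fin n) - ⟨j, hjn⟩) = _
    unfold ringW
    rw [← hs, ← hr]
    have hvi : ((⟨i, hin⟩ : Fin n) : ℕ) = i := rfl
    have hvj : ((⟨j, hjn⟩ : Fin n) : ℕ) = j := rfl
    have hDd : D = i - j + (j - i) := by rw [hD]; rfl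
    rcases fin_sub_val (⟨i, hin⟩ : Fin n) ⟨j, hjn⟩ with ⟨hc, hle⟩ | ⟨hc, hlt⟩
    · rw [hc, hvi, hvj, show i - j = D by omega]
    · rw [hc, hvi, hvj, show j - i = D by omega, show n - (n - D) = D by omega, add_comm]
  show _ = (if h : i < n ∧ j < n then (ringA n φ)⁻¹ ⟨i, h.1⟩ ⟨j, h.2⟩ else 0)
  rw [dif_pos (⟨hin, hjn⟩ : i < n ∧ j < n), key]
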